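/- Let F₀ have a continuous positive density f₀ on (0,M) with F₀ concentrated on [0,M], and let t ∈ (0,1). Define θ_{h,t}(x+i) for x ∈ (0,1), i = 0,…,m−1, recursively by θ_{h,t}(x) = Σ_{i=0}^{m−1}(1−F₀(x+i))K_h'(t−(x+i)) and θ_{h,t}(x+i) = θ_{h,t}(x+i−1) − K_h'(t−(x+i−1)). Then ∫ θ_{h,t}(x)²(F₀(x)−F₀(x−1)) dx = ∫_{t−h}^{t+h} K_h'(t−x)² F₀(x)(1−F₀(x)) dx for h small enough that (t−h,t+h) ⊂ (0,1). -/

import Mathlib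

open MeasureTheory

/-- Exact variance identity for the kernel density estimator score (Example 2):
`∫ θ_{h,t}(x)² (F₀(x) - F₀(x-1)) dx = ∫_{t-h}^{t+h} K_h'(t-x)² F₀(x)(1-F₀(x)) dx`,
where `g = K_h'` is supported on `[-h,h]` and `θ_{h,t}` is defined by the recursion
`θ(x) = Σ_{i=0}^{m-1}(1-F₀(x+i)) g(t-(x+i))`, `θ(x+i) = θ(x+i-1) - g(t-(x+i-1))`. -/
theorem stmt_11 (M : ℝ) (hM : 0 < M) (m : ℕ) (hm : m = ⌈M⌉₊)
    (F₀ : ℝ → ℝ) (hmono : Monotone F₀)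
    (hzero : ∀ x ≤ (0 : ℝ), F₀ x = 0)
    (hone : ∀ x : ℝ, M ≤ x → F₀ x = 1)
    (t h : ℝ) (hh : 0 < h) (hth : 0 < t - h ∧ t + h < 1)
    (g : ℝ → ℝ) (hgsupp : ∀ u : ℝ, h < |u| → g u = 0)
    (hgmeas : Measurable g)
    (θ : ℝ → ℝ)
    (hθbase : ∀ x ∈ Set.Ioo (0 : ℝ) 1,
      θ x = ∑ i ∈ Finset.range m, (1 - F₀ (x + (i : ℝ))) * g (t - (x + (i : ℝ))))
    (hθrec : ∀ x ∈ Set.Ioo (0 : ℝ) 1, ∀ i ∈ Finset.Icc 1 m,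
      θ (x + (i : ℝ)) = θ (x + (i : ℝ) - 1) - g (t - (x + (i : ℝ) - 1))) :
    ∫ x in Set.Ioo (0 : ℝ) ((m : ℝ) + 1), θ x ^ 2 * (F₀ x - F₀ (x - 1))
      = ∫ x in Set.Ioo (t - h) (t + h), g (t - x) ^ 2 * (F₀ x * (1 - F₀ x)) := by
  obtain ⟨hta, htb⟩ := hth
  -- basic facts
  have hF0 : ∀ x : ℝ, 0 ≤ F₀ x := by
    intro x
    rcases le_or_gt x 0 with hx | hx
    · rw [hzero x hx]
    · rw [← hzero 0 le_rfl]; exact hmono hx.le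
  have hF1 : ∀ x : ℝ, F₀ x ≤ 1 := by
    intro x
    rcases le_or_gt M x with hx | hx
    · rw [hone x hx]
    · rw [← hone M le_rfl]; exact hmono hx.le
  have hFmeas : Measurable F₀ := hmono.measurable
  have hm1 : 1 ≤ m := by rw [hm]; exact Nat.one_le_ceil_iff.mpr hM
  have hMm : M ≤ (m : ℝ) := by rw [hm]; exact Nat.le_ceil M
  have hgz : ∀ x : ℝ, x < t - h ∨ t + h < x → g (t - x) = 0 := by
    intro x hx
    apply hgsupp
    rcases hx with hx | hx
    · rw [abs_of_pos (by linarith)]; linarith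
    · rw [abs_of_neg (by linarith)]; linarith
  -- θ on (0,1)
  have P1 : ∀ x ∈ Set.Ioo (0:ℝ) 1, θ x = (1 - F₀ x) * g (t - x) := by
    intro x hx
    rw [hθbase x hx, Finset.sum_eq_single 0]
    · norm_num
    · intro i _ hi
      have hi1 : (1:ℝ) ≤ i := by exact_mod_cast Nat.one_le_iff_ne_zero.mpr hi
      have hg0 : g (t - (x + i)) = 0 := by
        apply hgsupp; rw [abs_of_neg (by linarith [hx.1])]; linarith [hx.1]
      rw [hg0, mul_zero]
    · intro habs; exact absurd (Finset.mem_range.mpr hm1) habs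
  have P2 : ∀ x ∈ Set.Ioo (0:ℝ) 1, ∀ i : ℕ, 1 ≤ i → i ≤ m →
      θ (x + i) = -(F₀ x * g (t - x)) := by
    intro x hx i hi1 him
    induction i with
    | zero => omega
    | succ k ih =>
      rcases Nat.lt_or_ge k 1 with hk | hk
      · have hk0 : k = 0 := by omega
        subst hk0
        have hrec := hθrec x hx 1 (Finset.mem_Icc.mpr ⟨le_refl 1, hm1⟩)
        push_cast at hrec ⊢
        rw [show x + 1 - 1 = x by ring] at hrec
        rw [hrec, P1 x hx]; ring
      · have hrec := hθrec x hx (k+1) (Finset.mem_Icc.mpr ⟨by omega, him⟩)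
        push_cast at hrec ⊢
        rw [show x + ((k:ℝ) + 1) - 1 = x + k by ring] at hrec
        have hg0 : g (t - (x + k)) = 0 := by
          apply hgsupp
          have hk' : (1:ℝ) ≤ k := by exact_mod_cast hk
          rw [abs_of_neg (by linarith [hx.1])]; linarith [hx.1]
        have ihk := ih hk (by omega)
        push_cast at ihk
        rw [hrec, hg0, sub_zero, ihk]
  -- explicit measurable versions
  set F : ℝ → ℝ := fun x =>
    (if x < 1 then (1 - F₀ x) * g (t - x) else F₀ (Int.fract x) * g (t - Int.fract x)) ^ 2
      * (F₀ x - F₀ (x - 1)) with hFdef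
  set G : ℝ → ℝ := fun x => g (t - x) ^ 2 * (F₀ x * (1 - F₀ x)) with hGdef
  have hFm : Measurable F := by
    apply Measurable.mul ?_ (hFmeas.sub (hFmeas.comp (measurable_id.sub measurable_const)))
    apply Measurable.pow ?_ measurable_const
    exact Measurable.ite (measurableSet_lt measurable_id measurable_const)
      ((measurable_const.sub hFmeas).mul (hgmeas.comp (measurable_const.sub measurable_id)))
      ((hFmeas.comp measurable_fract).mul
        (hgmeas.comp (measurable_const.sub measurable_fract)))
  have hGm : Measurable G := by
    exact ((hgmeas.comp (measurable_const.sub measurable_id)).pow measurable_const).mul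
      (hFmeas.mul (measurable_const.sub hFmeas))
  have hFnn : ∀ x, 0 ≤ F x := fun x =>
    mul_nonneg (sq_nonneg _) (sub_nonneg.mpr (hmono (by linarith)))
  have hGnn : ∀ x, 0 ≤ G x := fun x =>
    mul_nonneg (sq_nonneg _) (mul_nonneg (hF0 x) (sub_nonneg.mpr (hF1 x)))
  -- the union of open unit intervals
  set U : Set ℝ := ⋃ i ∈ Finset.range (m+1), Set.Ioo (i:ℝ) ((i:ℝ)+1) with hUdef
  have hUmeas : MeasurableSet U :=
    (Finset.range (m+1)).measurableSet_biUnion (fun i _ => measurableSet_Ioo)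
  have hUsub : U ⊆ Set.Ioo (0:ℝ) ((m:ℝ)+1) := by
    intro x hx
    simp only [hUdef, Set.mem_iUnion, Finset.mem_range, Set.mem_Ioo] at hx
    obtain ⟨i, hi, hx1, hx2⟩ := hx
    have him : (i:ℝ) ≤ m := by exact_mod_cast Nat.lt_succ_iff.mp hi
    have hi0 : (0:ℝ) ≤ i := Nat.cast_nonneg i
    exact ⟨by linarith, by linarith⟩
  have hUae : Set.Ioo (0:ℝ) ((m:ℝ)+1) =ᵐ[volume] U := by
    have h1 : volume (Set.Ioo (0:ℝ) ((m:ℝ)+1) \ U) = 0 := by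
      refine measure_mono_null ?_ ((Set.countable_range (Nat.cast : ℕ → ℝ)).measure_zero volume)
      rintro x ⟨hmem, hxU⟩
      obtain ⟨hx0, hxm⟩ := hmem
      by_contra hxr
      apply hxU
      have hkx : ((⌊x⌋₊ : ℕ):ℝ) ≤ x := Nat.floor_le hx0.le
      have hxk : x < (⌊x⌋₊:ℝ) + 1 := Nat.lt_floor_add_one x
      have hkne : ((⌊x⌋₊:ℕ):ℝ) ≠ x := fun hc => hxr ⟨⌊x⌋₊, hc⟩
      have hkm : ⌊x⌋₊ < m + 1 := by
        by_contra hc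
        have : (m:ℝ) + 1 ≤ ⌊x⌋₊ := by exact_mod_cast Nat.le_of_not_lt hc
        linarith
      simp only [hUdef, Set.mem_iUnion, Finset.mem_range, Set.mem_Ioo]
      exact ⟨⌊x⌋₊, hkm, lt_of_le_of_ne hkx hkne, hxk⟩
    have h2 : volume (U \ Set.Ioo (0:ℝ) ((m:ℝ)+1)) = 0 := by
      rw [Set.diff_eq_empty.mpr hUsub]
      exact measure_empty
    exact MeasureTheory.ae_eq_set.mpr ⟨h1, h2⟩
  have hres : volume.restrict (Set.Ioo (0:ℝ) ((m:ℝ)+1)) = volume.restrict U :=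
    Measure.restrict_congr_set hUae
  -- θ equals F on U
  have hfF : Set.EqOn (fun x => θ x ^ 2 * (F₀ x - F₀ (x - 1))) F U := by
    intro x hx
    simp only [hUdef, Set.mem_iUnion, Finset.mem_range, Set.mem_Ioo] at hx
    obtain ⟨i, hi, hx1, hx2⟩ := hx
    rcases Nat.eq_zero_or_pos i with hi0 | hipos
    · subst hi0
      push_cast at hx1 hx2
      have hx01 : x ∈ Set.Ioo (0:ℝ) 1 := ⟨hx1, by linarith⟩
      simp only [hFdef]
      rw [if_pos hx01.2, P1 x hx01]
    · have hy : x - i ∈ Set.Ioo (0:ℝ) 1 := ⟨by linarith, by linarith⟩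
      have him : i ≤ m := Nat.lt_succ_iff.mp hi
      have hθx : θ x = -(F₀ (x - i) * g (t - (x - i))) := by
        have hP := P2 (x - i) hy i hipos him
        rwa [show x - (i:ℝ) + i = x by ring] at hP
      have hfr : Int.fract x = x - i := by
        have hfr' : Int.fract ((x - i) + (i:ℕ)) = x - i := by
          rw [Int.fract_add_natCast]
          exact Int.fract_eq_self.mpr ⟨hy.1.le, hy.2⟩
        rwa [show (x - (i:ℝ)) + ((i:ℕ):ℝ) = x by push_cast; ring] at hfr'
      have hx1' : ¬ x < 1 := by
        have hi1 : (1:ℝ) ≤ i := by exact_mod_cast hipos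
        push_cast at hx1
        linarith
      simp only [hFdef]
      rw [if_neg hx1', hfr, hθx]
      ring
  -- key lintegral identity
  have key : ∫⁻ x in U, ENNReal.ofReal (F x) =
      ∫⁻ x in Set.Ioo (t-h) (t+h), ENNReal.ofReal (G x) := by
    have hdisj : Set.PairwiseDisjoint ↑(Finset.range (m+1))
        (fun i : ℕ => Set.Ioo (i:ℝ) ((i:ℝ)+1)) := by
      intro i _ j _ hij
      apply Set.disjoint_left.mpr
      rintro x ⟨hx1, hx2⟩ ⟨hy1, hy2⟩
      rcases lt_or_gt_of_ne hij with hlt | hlt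
      · have : (i:ℝ) + 1 ≤ j := by exact_mod_cast hlt
        linarith
      · have : (j:ℝ) + 1 ≤ i := by exact_mod_cast hlt
        linarith
    rw [hUdef, lintegral_biUnion_finset hdisj (fun i _ => measurableSet_Ioo)]
    have hshift : ∀ i ∈ Finset.range (m+1),
        ∫⁻ x in Set.Ioo (i:ℝ) ((i:ℝ)+1), ENNReal.ofReal (F x)
          = ∫⁻ x in Set.Ioo (0:ℝ) 1, ENNReal.ofReal (F (x + i)) := by
      intro i _
      rw [← lintegral_indicator measurableSet_Ioo, ← lintegral_indicator measurableSet_Ioo,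
        ← lintegral_add_right_eq_self
          (fun x => (Set.Ioo (i:ℝ) ((i:ℝ)+1)).indicator (fun y => ENNReal.ofReal (F y)) x) (i:ℝ)]
      apply lintegral_congr
      intro x
      by_cases hx : x ∈ Set.Ioo (0:ℝ) 1
      · rw [Set.indicator_of_mem hx,
          Set.indicator_of_mem (show x + (i:ℝ) ∈ Set.Ioo (i:ℝ) ((i:ℝ)+1) from
            ⟨by linarith [hx.1], by linarith [hx.2]⟩)]
      · rw [Set.indicator_of_notMem hx, Set.indicator_of_notMem]
        intro hc
        exact hx ⟨by linarith [hc.1], by linarith [hc.2]⟩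
    rw [Finset.sum_congr rfl hshift]
    have hsum := lintegral_finset_sum (μ := volume.restrict (Set.Ioo (0:ℝ) 1))
      (Finset.range (m+1)) (f := fun (i : ℕ) (x : ℝ) => ENNReal.ofReal (F (x + (i:ℝ))))
      (fun i _ => (hFm.comp (measurable_add_const (i:ℝ))).ennreal_ofReal)
    rw [← hsum]
    have hpt : ∀ᵐ x ∂volume, x ∈ Set.Ioo (0:ℝ) 1 →
        ∑ i ∈ Finset.range (m+1), ENNReal.ofReal (F (x + (i:ℕ))) = ENNReal.ofReal (G x) := by
      apply Filter.Eventually.of_forall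
      intro x hx
      rw [← ENNReal.ofReal_sum_of_nonneg (fun i _ => hFnn _)]
      congr 1
      rw [Finset.sum_range_succ']
      have hF0x : F (x + ((0:ℕ):ℝ)) = ((1 - F₀ x) * g (t - x)) ^ 2 * F₀ x := by
        simp only [hFdef, Nat.cast_zero, add_zero]
        rw [if_pos hx.2, hzero (x - 1) (by linarith [hx.2])]
        ring
      have hFix : ∀ i ∈ Finset.range m, F (x + ((i+1:ℕ):ℝ)) =
          (F₀ x * g (t - x)) ^ 2 * (F₀ (x + ((i+1:ℕ):ℝ)) - F₀ (x + (i:ℕ))) := by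
        intro i _
        have hlt : ¬ (x + ((i+1:ℕ):ℝ) < 1) := by
          push_cast
          have : (0:ℝ) ≤ i := Nat.cast_nonneg i
          push_neg
          linarith [hx.1]
        have hfr : Int.fract (x + ((i+1:ℕ):ℝ)) = x := by
          rw [Int.fract_add_natCast]
          exact Int.fract_eq_self.mpr ⟨hx.1.le, hx.2⟩
        have hsub : x + ((i+1:ℕ):ℝ) - 1 = x + (i:ℕ) := by push_cast; ring
        simp only [hFdef]
        rw [if_neg hlt, hfr, hsub]
      rw [Finset.sum_congr rfl hFix, hF0x, ← Finset.mul_sum,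
        Finset.sum_range_sub (fun i : ℕ => F₀ (x + (i:ℕ)))]
      have hFm1 : F₀ (x + ((m:ℕ):ℝ)) = 1 := hone _ (by push_cast; linarith [hx.1])
      have hFz : F₀ (x + ((0:ℕ):ℝ)) = F₀ x := by norm_num
      rw [hFm1, hFz]
      simp only [hGdef]
      ring
    rw [setLIntegral_congr_fun_ae measurableSet_Ioo hpt]
    -- restrict (0,1) to (t-h,t+h)
    have e1 : ∫⁻ x in Set.Ioo (0:ℝ) 1, ENNReal.ofReal (G x)
        = ∫⁻ x in Set.Icc (t-h) (t+h), ENNReal.ofReal (G x) := by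
      rw [← lintegral_indicator measurableSet_Ioo, ← lintegral_indicator measurableSet_Icc]
      apply lintegral_congr
      intro x
      by_cases hx : x ∈ Set.Icc (t-h) (t+h)
      · rw [Set.indicator_of_mem hx, Set.indicator_of_mem
          (show x ∈ Set.Ioo (0:ℝ) 1 from ⟨by linarith [hx.1], by linarith [hx.2]⟩)]
      · rw [Set.indicator_of_notMem hx]
        by_cases hx2 : x ∈ Set.Ioo (0:ℝ) 1
        · rw [Set.indicator_of_mem hx2]
          have hgx : g (t - x) = 0 := by
            apply hgz
            simp only [Set.mem_Icc, not_and_or, not_le] at hx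
            rcases hx with h1 | h1
            · left; linarith
            · right; linarith
          simp [hGdef, hgx]
        · rw [Set.indicator_of_notMem hx2]
    rw [e1, setLIntegral_congr (Filter.EventuallyEq.symm Ioo_ae_eq_Icc)]
  -- assemble
  calc ∫ x in Set.Ioo (0:ℝ) ((m:ℝ)+1), θ x ^ 2 * (F₀ x - F₀ (x - 1))
      = ∫ x in U, θ x ^ 2 * (F₀ x - F₀ (x - 1)) := by rw [hres]
    _ = ∫ x in U, F x := setIntegral_congr_fun hUmeas hfF
    _ = (∫⁻ x in U, ENNReal.ofReal (F x)).toReal :=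
        integral_eq_lintegral_of_nonneg_ae (Filter.Eventually.of_forall hFnn)
          hFm.aestronglyMeasurable
    _ = (∫⁻ x in Set.Ioo (t-h) (t+h), ENNReal.ofReal (G x)).toReal := by rw [key]
    _ = ∫ x in Set.Ioo (t-h) (t+h), G x :=
        (integral_eq_lintegral_of_nonneg_ae (Filter.Eventually.of_forall hGnn)
          hGm.aestronglyMeasurable).symm
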